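/- arXiv:0811.3244 — 8 statements merged into one kernel-verified Lean document; each statement's English description precedes it below -/
import Mathlib

section
/- In a MIN-kCSP where every variable participates in at least δ·η·C(n,k-1) fragile constraints, the instance is fragile-dense: for every assignment x, variable v, and distinct values i ≠ j, b(x,v,i) + b(x,v,j) ≥ δ·C(n,k-1). -/
open Finset
open scoped Classical

/-- b(x,v,i): total (normalized) cost of k-sets containing v when v is reassigned to i. -/
noncomputable def bCSP {V D : Type*} [Fintype V] [DecidableEq V] (k : ℕ)
    (p : Finset V → (V → D) → ℝ) (x : V → D) (v : V) (i : D) : ℝ :=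
  ∑ I ∈ ((univ : Finset V).powersetCard k).filter (fun I => v ∈ I),
    p I (Function.update x v i)

/-- The MIN-kCSP objective: Obj(x) = ∑_{I ∈ binom(V,k)} p_I(x). -/
noncomputable def objCSP {V D : Type*} [Fintype V] (k : ℕ)
    (p : Finset V → (V → D) → ℝ) (x : V → D) : ℝ :=
  ∑ I ∈ (univ : Finset V).powersetCard k, p I x

/-- if every variable participates in at least δ·η·C(n,k-1) fragile
constraints, the instance is fragile-dense: b(x,v,i)+b(x,v,j) ≥ δ·C(n,k-1) for
all assignments x, variables v and distinct values i ≠ j. -/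
theorem fragile_implies_fragile_dense {V D : Type*} [Fintype V] [DecidableEq V]
    (k : ℕ) (hk : 1 ≤ k)
    (m : Finset V → ℕ) (pc : (I : Finset V) → Fin (m I) → (V → D) → ℝ)
    (η δ : ℝ) (hη : 0 < η) (hδ : 0 < δ)
    (hpc01 : ∀ I ℓ x, pc I ℓ x = 0 ∨ pc I ℓ x = 1)
    (Fragile : (I : Finset V) → Fin (m I) → Prop)
    (hFragile : ∀ I ℓ, Fragile I ℓ → ∀ (x : V → D) (v : V), v ∈ I →
      ∀ i j : D, i ≠ j →
        1 ≤ pc I ℓ (Function.update x v i) + pc I ℓ (Function.update x v j))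
    (hdense : ∀ v : V,
      δ * η * ((Fintype.card V).choose (k - 1)) ≤
        ∑ I ∈ ((univ : Finset V).powersetCard k).filter (fun I => v ∈ I),
          (((univ : Finset (Fin (m I))).filter (fun ℓ => Fragile I ℓ)).card : ℝ)) :
    ∀ (x : V → D) (v : V) (i j : D), i ≠ j →
      δ * ((Fintype.card V).choose (k - 1)) ≤
        bCSP k (fun I z => η⁻¹ * ∑ ℓ, pc I ℓ z) x v i +
        bCSP k (fun I z => η⁻¹ * ∑ ℓ, pc I ℓ z) x v j := by
  intro x v i j hij
  unfold bCSP
  rw [← Finset.sum_add_distrib]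
  have key : ∀ I ∈ ((univ : Finset V).powersetCard k).filter (fun I => v ∈ I),
      η⁻¹ * (((univ : Finset (Fin (m I))).filter (fun ℓ => Fragile I ℓ)).card : ℝ) ≤
      η⁻¹ * ∑ ℓ, pc I ℓ (Function.update x v i) +
      η⁻¹ * ∑ ℓ, pc I ℓ (Function.update x v j) := by
    intro I hI
    rw [Finset.mem_filter] at hI
    rw [← mul_add, ← Finset.sum_add_distrib]
    apply mul_le_mul_of_nonneg_left _ (le_of_lt (inv_pos.mpr hη))
    rw [Finset.card_filter]
    push_cast
    apply Finset.sum_le_sum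
    intro ℓ _
    by_cases hF : Fragile I ℓ
    · simpa [hF] using hFragile I ℓ hF x v hI.2 i j hij
    · simp only [hF, if_false]
      have h1 : (0:ℝ) ≤ pc I ℓ (Function.update x v i) := by
        rcases hpc01 I ℓ (Function.update x v i) with h | h <;> simp [h]
      have h2 : (0:ℝ) ≤ pc I ℓ (Function.update x v j) := by
        rcases hpc01 I ℓ (Function.update x v j) with h | h <;> simp [h]
      linarith
  calc δ * ((Fintype.card V).choose (k - 1) : ℝ)
      ≤ ∑ I ∈ ((univ : Finset V).powersetCard k).filter (fun I => v ∈ I),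
          η⁻¹ * (((univ : Finset (Fin (m I))).filter (fun ℓ => Fragile I ℓ)).card : ℝ) := by
        rw [← Finset.mul_sum, inv_mul_eq_div, le_div_iff₀ hη]
        calc δ * ((Fintype.card V).choose (k - 1) : ℝ) * η
            = δ * η * ((Fintype.card V).choose (k - 1) : ℝ) := by ring
          _ ≤ _ := hdense v
    _ ≤ _ := Finset.sum_le_sum key
end

section
/- In a fragile-dense MIN-kCSP with optimal assignment x* of cost γ·C(n,k), every unclear variable v satisfies b(x*,v,x*_v) ≥ (δ/3)·C(n,k-1), and consequently the number of unclear variables is at most 3(n-k+1)γ/δ. -/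
open Finset
open scoped Classical

/-- in a fragile-dense MIN-kCSP with optimum γ·C(n,k), every unclear
variable v has b(x*,v,x*_v) ≥ (δ/3)C(n,k-1), and the number of unclear variables is
at most 3(n-k+1)γ/δ. -/
theorem few_unclear {V D : Type*} [Fintype V] [DecidableEq V] (k : ℕ)
    (hk : 1 ≤ k) (hkn : k ≤ Fintype.card V)
    (p : Finset V → (V → D) → ℝ) (hp0 : ∀ I x, 0 ≤ p I x)
    (δ γ : ℝ) (hδ : 0 < δ)
    (hdense : ∀ (x : V → D) (v : V) (i j : D), i ≠ j →
      δ * ((Fintype.card V).choose (k - 1)) ≤ bCSP k p x v i + bCSP k p x v j)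
    (xs : V → D) (hopt : ∀ x : V → D, objCSP k p xs ≤ objCSP k p x)
    (hγ : objCSP k p xs = γ * ((Fintype.card V).choose k)) :
    (∀ v : V, (∃ j, j ≠ xs v ∧
        bCSP k p xs v j - (δ / 3) * ((Fintype.card V).choose (k - 1))
          ≤ bCSP k p xs v (xs v)) →
      (δ / 3) * ((Fintype.card V).choose (k - 1)) ≤ bCSP k p xs v (xs v)) ∧
    (((univ : Finset V).filter (fun v => ∃ j, j ≠ xs v ∧
        bCSP k p xs v j - (δ / 3) * ((Fintype.card V).choose (k - 1))
          ≤ bCSP k p xs v (xs v))).card : ℝ)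
      ≤ 3 * ((Fintype.card V : ℝ) - k + 1) * γ / δ := by
  set n := Fintype.card V with hn
  set C : ℝ := ((n.choose (k - 1) : ℕ) : ℝ) with hC
  have hClear : ∀ v : V, (∃ j, j ≠ xs v ∧
      bCSP k p xs v j - (δ / 3) * C ≤ bCSP k p xs v (xs v)) →
      (δ / 3) * C ≤ bCSP k p xs v (xs v) := by
    intro v ⟨j, hj, hle⟩
    have hd := hdense xs v j (xs v) hj
    linarith
  refine ⟨hClear, ?_⟩
  -- nonnegativity of b
  have hb0 : ∀ v i, 0 ≤ bCSP k p xs v i := fun v i =>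
    Finset.sum_nonneg fun I _ => hp0 _ _
  -- identity ∑ v, b(xs,v,xs v) = k * Obj(xs)
  have hid : ∑ v : V, bCSP k p xs v (xs v) = k * objCSP k p xs := by
    unfold bCSP objCSP
    simp only [Function.update_eq_self]
    calc ∑ v : V, ∑ I ∈ ((univ : Finset V).powersetCard k).filter (fun I => v ∈ I), p I xs
        = ∑ v : V, ∑ I ∈ (univ : Finset V).powersetCard k, if v ∈ I then p I xs else 0 := by
          simp [Finset.sum_filter]
      _ = ∑ I ∈ (univ : Finset V).powersetCard k, ∑ v : V, if v ∈ I then p I xs else 0 :=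
          Finset.sum_comm
      _ = ∑ I ∈ (univ : Finset V).powersetCard k, (k : ℝ) * p I xs := by
          refine Finset.sum_congr rfl fun I hI => ?_
          have hcard : I.card = k := (Finset.mem_powersetCard.mp hI).2
          rw [Finset.sum_ite_mem, Finset.univ_inter, Finset.sum_const, hcard,
            nsmul_eq_mul]
      _ = (k : ℝ) * ∑ I ∈ (univ : Finset V).powersetCard k, p I xs := by
          rw [Finset.mul_sum]
  set U := (univ : Finset V).filter (fun v => ∃ j, j ≠ xs v ∧
      bCSP k p xs v j - (δ / 3) * C ≤ bCSP k p xs v (xs v)) with hU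
  have hsum : (U.card : ℝ) * ((δ / 3) * C) ≤ ∑ v : V, bCSP k p xs v (xs v) := by
    calc (U.card : ℝ) * ((δ / 3) * C) = ∑ _v ∈ U, (δ / 3) * C := by
          rw [Finset.sum_const, nsmul_eq_mul]
      _ ≤ ∑ v ∈ U, bCSP k p xs v (xs v) :=
          Finset.sum_le_sum fun v hv => hClear v (Finset.mem_filter.mp hv).2
      _ ≤ ∑ v : V, bCSP k p xs v (xs v) :=
          Finset.sum_le_sum_of_subset_of_nonneg (Finset.filter_subset _ _)
            (fun v _ _ => hb0 v (xs v))
  -- choose identity: k * choose n k = (n - k + 1) * choose n (k-1)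
  have hchoose : (k : ℝ) * (n.choose k : ℝ) = ((n : ℝ) - k + 1) * C := by
    have h1 : n.choose k * k = n.choose (k - 1) * (n - (k - 1)) := by
      conv_lhs => rw [show k = (k - 1) + 1 from (Nat.succ_pred_eq_of_pos hk).symm]
      exact Nat.choose_succ_right_eq n (k - 1)
    have h2 : ((n - (k - 1) : ℕ) : ℝ) = (n : ℝ) - k + 1 := by
      have hk1 : k - 1 ≤ n := le_trans (Nat.sub_le _ _) hkn
      rw [Nat.cast_sub hk1, Nat.cast_sub hk]
      push_cast
      ring
    have := congrArg (fun m : ℕ => (m : ℝ)) h1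
    push_cast at this
    rw [Nat.cast_sub (le_trans (Nat.sub_le _ _) hkn)] at this
    rw [Nat.cast_sub hk] at this
    push_cast at this
    nlinarith [this]
  have hγ0 : 0 ≤ objCSP k p xs := Finset.sum_nonneg fun I _ => hp0 _ _
  have hCpos : (0 : ℝ) < C := by
    have h : 0 < n.choose (k - 1) := Nat.choose_pos (le_trans (Nat.sub_le _ _) hkn)
    rw [hC]; exact_mod_cast h
  -- combine
  have hfinal : (U.card : ℝ) * ((δ / 3) * C) ≤ γ * (((n : ℝ) - k + 1) * C) := by
    calc (U.card : ℝ) * ((δ / 3) * C) ≤ ∑ v : V, bCSP k p xs v (xs v) := hsum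
      _ = k * objCSP k p xs := hid
      _ = γ * ((k : ℝ) * (n.choose k : ℝ)) := by rw [hγ]; ring
      _ = γ * (((n : ℝ) - k + 1) * C) := by rw [hchoose]
  have hUle : (U.card : ℝ) * (δ / 3) ≤ γ * ((n : ℝ) - k + 1) := by
    have h := (mul_le_mul_iff_of_pos_right hCpos).mp (by nlinarith [hfinal] : (U.card : ℝ) * (δ / 3) * C ≤ γ * ((n : ℝ) - k + 1) * C)
    linarith
  rw [le_div_iff₀ hδ]
  nlinarith [hUle]
end

section
/- Suppose assignment x⁽¹⁾ differs from the optimal x* on at most δn/(12k) variables (event E₁) and n is large enough that (n-k+1)/(k-1) ≥ n/k. Define x⁽²⁾_v = argmin_i b(x⁽¹⁾,v,i) and let C = {v : b(x⁽¹⁾,v,x⁽²⁾_v) < b(x⁽¹⁾,v,j) - δ·C(n,k-1)/6 for all j ≠ x⁽²⁾_v}. Then x⁽²⁾_v = x*_v for every v ∈ C. -/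
open Finset
open scoped Classical

lemma card_pairs_le {V : Type*} [Fintype V] [DecidableEq V] (k : ℕ) (v u : V) :
    (((univ : Finset V).powersetCard k).filter (fun I => v ∈ I ∧ u ∈ I ∧ u ≠ v)).card
      ≤ (Fintype.card V).choose (k-2) := by
  classical
  have : (((univ : Finset V).powersetCard k).filter
      (fun I => v ∈ I ∧ u ∈ I ∧ u ≠ v)).card
      ≤ ((univ : Finset V).powersetCard (k-2)).card := by
    apply Finset.card_le_card_of_injOn (fun I => (I.erase v).erase u)
    · intro I hI
      simp only [Finset.mem_coe, mem_filter, Finset.mem_powersetCard] at hI ⊢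
      obtain ⟨⟨_, hcard⟩, hvI, huI, huv⟩ := hI
      refine ⟨subset_univ _, ?_⟩
      have hu' : u ∈ I.erase v := Finset.mem_erase.2 ⟨huv, huI⟩
      rw [Finset.card_erase_of_mem hu', Finset.card_erase_of_mem hvI, hcard]
      omega
    · intro I hI J hJ hIJ
      simp only [coe_filter, Set.mem_setOf_eq, Finset.mem_powersetCard] at hI hJ
      obtain ⟨_, hvI, huI, huv⟩ := hI
      obtain ⟨_, hvJ, huJ, _⟩ := hJ
      have hI' : I = insert v (insert u ((I.erase v).erase u)) := by
        rw [Finset.insert_erase (Finset.mem_erase.2 ⟨huv, huI⟩), Finset.insert_erase hvI]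
      have hJ' : J = insert v (insert u ((J.erase v).erase u)) := by
        rw [Finset.insert_erase (Finset.mem_erase.2 ⟨huv, huJ⟩), Finset.insert_erase hvJ]
      simp only at hIJ
      rw [hI', hJ', hIJ]
  simpa using this

lemma bCSP_lip {V D : Type*} [Fintype V] [DecidableEq V] (k : ℕ)
    (p : Finset V → (V → D) → ℝ)
    (hloc : ∀ (I : Finset V) (x y : V → D), (∀ u ∈ I, x u = y u) → p I x = p I y)
    (hp01 : ∀ I x, 0 ≤ p I x ∧ p I x ≤ 1)
    (y y' : V → D) (v : V) (i : D) :
    |bCSP k p y v i - bCSP k p y' v i| ≤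
      (((univ : Finset V).filter (fun u => y u ≠ y' u)).card : ℝ)
        * ((Fintype.card V).choose (k-2)) := by
  classical
  set S := ((univ : Finset V).powersetCard k).filter (fun I => v ∈ I) with hS
  set P : Finset V → Prop := fun I => ∃ u ∈ I, u ≠ v ∧ y u ≠ y' u with hP
  have hsum : bCSP k p y v i - bCSP k p y' v i
      = ∑ I ∈ S.filter P, (p I (Function.update y v i) - p I (Function.update y' v i)) := by
    rw [bCSP, bCSP, ← Finset.sum_sub_distrib]
    symm
    apply Finset.sum_filter_of_ne
    intro I hI hne
    by_contra hcon
    push_neg at hcon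
    apply hne
    rw [hloc I (Function.update y v i) (Function.update y' v i) ?_, sub_self]
    intro u huI
    by_cases huv : u = v
    · subst huv; simp
    · have := hcon u huI huv
      simp [Function.update_of_ne huv, this]
  rw [hsum]
  calc |∑ I ∈ S.filter P, (p I (Function.update y v i) - p I (Function.update y' v i))|
      ≤ ∑ I ∈ S.filter P, |p I (Function.update y v i) - p I (Function.update y' v i)| :=
        Finset.abs_sum_le_sum_abs _ _
    _ ≤ ∑ _I ∈ S.filter P, (1 : ℝ) := by
        apply Finset.sum_le_sum
        intro I _
        have h1 := hp01 I (Function.update y v i)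
        have h2 := hp01 I (Function.update y' v i)
        rw [abs_sub_le_iff]; constructor <;> linarith [h1.1, h1.2, h2.1, h2.2]
    _ = ((S.filter P).card : ℝ) := by simp
    _ ≤ (((univ : Finset V).filter (fun u => y u ≠ y' u)).card : ℝ)
        * ((Fintype.card V).choose (k-2)) := ?_
  have hsub : S.filter P ⊆ ((univ : Finset V).filter (fun u => y u ≠ y' u)).biUnion
      (fun u => ((univ : Finset V).powersetCard k).filter (fun I => v ∈ I ∧ u ∈ I ∧ u ≠ v)) := by
    intro I hI
    simp only [hS, hP, mem_filter, Finset.mem_biUnion] at hI ⊢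
    obtain ⟨⟨hIk, hvI⟩, u, huI, huv, hyu⟩ := hI
    exact ⟨u, ⟨Finset.mem_univ u, hyu⟩, ⟨hIk, hvI, huI, huv⟩⟩
  have h1 : (S.filter P).card ≤ ∑ u ∈ (univ : Finset V).filter (fun u => y u ≠ y' u),
      (((univ : Finset V).powersetCard k).filter (fun I => v ∈ I ∧ u ∈ I ∧ u ≠ v)).card :=
    (Finset.card_le_card hsub).trans Finset.card_biUnion_le
  have h2 : (S.filter P).card ≤
      ((univ : Finset V).filter (fun u => y u ≠ y' u)).card * (Fintype.card V).choose (k-2) := by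
    refine h1.trans ?_
    calc _ ≤ ∑ _u ∈ (univ : Finset V).filter (fun u => y u ≠ y' u),
        (Fintype.card V).choose (k-2) := Finset.sum_le_sum (fun u _ => card_pairs_le k v u)
      _ = _ := by rw [Finset.sum_const, smul_eq_mul]
  exact_mod_cast h2


lemma opt_local {V D : Type*} [Fintype V] [DecidableEq V] (k : ℕ)
    (p : Finset V → (V → D) → ℝ)
    (hloc : ∀ (I : Finset V) (x y : V → D), (∀ u ∈ I, x u = y u) → p I x = p I y)
    (xs : V → D) (hopt : ∀ x : V → D, objCSP k p xs ≤ objCSP k p x)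
    (v : V) (j : D) : bCSP k p xs v (xs v) ≤ bCSP k p xs v j := by
  classical
  have h := hopt (Function.update xs v j)
  have split : ∀ y : V → D, objCSP k p y
      = (∑ I ∈ ((univ : Finset V).powersetCard k).filter (fun I => v ∈ I), p I y)
      + (∑ I ∈ ((univ : Finset V).powersetCard k).filter (fun I => ¬ v ∈ I), p I y) := by
    intro y; rw [objCSP, Finset.sum_filter_add_sum_filter_not]
  rw [split xs, split (Function.update xs v j)] at h
  have e1 : ∑ I ∈ ((univ : Finset V).powersetCard k).filter (fun I => ¬ v ∈ I),
      p I (Function.update xs v j)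
      = ∑ I ∈ ((univ : Finset V).powersetCard k).filter (fun I => ¬ v ∈ I), p I xs := by
    apply Finset.sum_congr rfl
    intro I hI
    apply hloc
    intro u huI
    have huv : u ≠ v := by rintro rfl; exact (Finset.mem_filter.1 hI).2 huI
    simp [Function.update_of_ne huv]
  have e2 : bCSP k p xs v (xs v)
      = ∑ I ∈ ((univ : Finset V).powersetCard k).filter (fun I => v ∈ I), p I xs := by
    rw [bCSP, Function.update_eq_self]
  rw [e1] at h
  rw [e2, bCSP]
  linarith

set_option maxHeartbeats 1000000 in
/-- if x⁽¹⁾ differs from the optimum x* on at most δn/(12k) variables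
and n is large enough that n/k ≤ (n-k+1)/(k-1), then every clear-cut variable
v ∈ C (with x⁽²⁾ the greedy improvement of x⁽¹⁾) satisfies x⁽²⁾_v = x*_v. -/
theorem clearcut_correct {V D : Type*} [Fintype V] [DecidableEq V] (k : ℕ)
    (hk : 2 ≤ k)
    (hn : (Fintype.card V : ℝ) / k ≤ ((Fintype.card V : ℝ) - k + 1) / ((k : ℝ) - 1))
    (δ : ℝ) (hδ : 0 < δ)
    (p : Finset V → (V → D) → ℝ)
    (hloc : ∀ (I : Finset V) (x y : V → D), (∀ u ∈ I, x u = y u) → p I x = p I y)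
    (hp01 : ∀ I x, 0 ≤ p I x ∧ p I x ≤ 1)
    (hdense : ∀ (x : V → D) (v : V) (i j : D), i ≠ j →
      δ * ((Fintype.card V).choose (k - 1)) ≤ bCSP k p x v i + bCSP k p x v j)
    (xs : V → D) (hopt : ∀ x : V → D, objCSP k p xs ≤ objCSP k p x)
    (x1 : V → D)
    (hdiff : (((univ : Finset V).filter (fun u => x1 u ≠ xs u)).card : ℝ)
      ≤ δ * (Fintype.card V) / (12 * k))
    (x2 : V → D) (hx2 : ∀ (v : V) (i : D), bCSP k p x1 v (x2 v) ≤ bCSP k p x1 v i)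
    (v : V)
    (hv : ∀ j : D, j ≠ x2 v →
      bCSP k p x1 v (x2 v) <
        bCSP k p x1 v j - δ * ((Fintype.card V).choose (k - 1)) / 6) :
    x2 v = xs v := by
  classical
  by_contra hne
  have hne' : xs v ≠ x2 v := fun h => hne h.symm
  set n := Fintype.card V with hn'
  set t := ((((univ : Finset V).filter (fun u => x1 u ≠ xs u)).card : ℝ)) with ht
  set M := ((n.choose (k-2) : ℕ) : ℝ) with hM
  set A := ((n.choose (k-1) : ℕ) : ℝ) with hA
  have hM0 : 0 ≤ M := by positivity
  have ht0 : 0 ≤ t := by positivity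
  have hk0 : (0:ℝ) < k := by positivity
  have hk1 : (0:ℝ) < (k:ℝ) - 1 := by
    have : (2:ℝ) ≤ (k:ℝ) := by exact_mod_cast hk
    linarith
  have hlip1 := bCSP_lip k p hloc hp01 x1 xs v (xs v)
  have hlip2 := bCSP_lip k p hloc hp01 x1 xs v (x2 v)
  have hopt' := opt_local k p hloc xs hopt v (x2 v)
  have hclear := hv (xs v) hne'
  have a1 := abs_le.mp hlip1
  have a2 := abs_le.mp hlip2
  have key : δ * A / 6 < 2 * (t * M) := by
    have b1 : bCSP k p x1 v (xs v) ≤ bCSP k p xs v (xs v) + t * M := by linarith [a1.1]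
    have b2 : bCSP k p xs v (x2 v) ≤ bCSP k p x1 v (x2 v) + t * M := by linarith [a2.2]
    linarith
  -- cross-multiplied version of hn
  have hn2 : (n:ℝ) * ((k:ℝ) - 1) ≤ ((n:ℝ) - k + 1) * k := by
    rw [div_le_div_iff₀ hk0 hk1] at hn
    linarith
  -- n * M ≤ k * A
  have hNM : (n:ℝ) * M ≤ (k:ℝ) * A := by
    by_cases hcase : k - 2 ≤ n
    · have hid : n.choose (k-2+1) * (k-2+1) = n.choose (k-2) * (n - (k-2)) :=
        Nat.choose_succ_right_eq n (k-2)
      have hk21 : k - 2 + 1 = k - 1 := by omega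
      rw [hk21] at hid
      have hidR : A * ((k:ℝ) - 1) = M * ((n:ℝ) - (k:ℝ) + 2) := by
        have := congrArg (fun m : ℕ => (m : ℝ)) hid
        push_cast [Nat.cast_sub hcase] at this
        have hc2 : ((k - 2 : ℕ) : ℝ) = (k:ℝ) - 2 := by
          have : (2:ℕ) ≤ k := hk
          push_cast [Nat.cast_sub this]
          ring
        have hc1 : ((k - 1 : ℕ) : ℝ) = (k:ℝ) - 1 := by
          have h1 : (1:ℕ) ≤ k := by omega
          push_cast [Nat.cast_sub h1]
          ring
        rw [hc1, hc2] at this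
        rw [hA, hM]
        linarith [this]
      have hA0 : 0 ≤ A := by positivity
      nlinarith [hn2, hM0, hk1, hidR]
    · have hM0' : M = 0 := by
        have : n.choose (k-2) = 0 := Nat.choose_eq_zero_of_lt (by omega)
        rw [hM, this]; simp
      have hA0 : 0 ≤ A := by positivity
      rw [hM0']
      nlinarith
  -- combine
  have hfin : 2 * (t * M) ≤ δ * A / 6 := by
    have step1 : 2 * (t * M) ≤ 2 * (δ * n / (12 * k)) * M := by
      have h := mul_le_mul_of_nonneg_right hdiff hM0
      linarith
    have step2 : 2 * (δ * n / (12 * k)) * M = δ * ((n:ℝ) * M) / (6 * k) := by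
      field_simp; ring
    have step3 : δ * ((n:ℝ) * M) / (6 * k) ≤ δ * ((k:ℝ) * A) / (6 * k) := by
      gcongr
    have step4 : δ * ((k:ℝ) * A) / (6 * k) = δ * A / 6 := by
      field_simp
    linarith [step1, step2.le, step3, step4.le]
  linarith
end

section
/- Under the same hypotheses (x⁽¹⁾ differs from x* on at most δn/(12k) variables, large n), every clear variable v (i.e., b(x*,v,x*_v) < b(x*,v,j) - (δ/3)C(n,k-1) for all j ≠ x*_v) belongs to the set C = {v : b(x⁽¹⁾,v,x⁽²⁾_v) < b(x⁽¹⁾,v,j) - δ·C(n,k-1)/6 for all j ≠ x⁽²⁾_v}. Hence |V ∖ C| is at most the number of unclear variables, which is at most 3nγ/δ when Obj(x*) = γC(n,k). -/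
open Finset
open scoped Classical

lemma card_pair_filter {V : Type*} [Fintype V] [DecidableEq V] (k : ℕ) (v u : V) :
    ((((univ : Finset V).powersetCard k).filter
        (fun I => v ∈ I ∧ u ∈ I ∧ u ≠ v)).card)
      ≤ (Fintype.card V).choose (k - 2) := by
  classical
  have h := Finset.card_le_card_of_injOn (fun I => (I.erase v).erase u)
    (s := (((univ : Finset V).powersetCard k).filter (fun I => v ∈ I ∧ u ∈ I ∧ u ≠ v)))
    (t := (univ : Finset V).powersetCard (k - 2)) ?_ ?_
  · simpa [Finset.card_powersetCard] using h
  · intro I hI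
    simp only [Finset.mem_coe, mem_filter, Finset.mem_powersetCard] at hI ⊢
    obtain ⟨⟨-, hcard⟩, hv, hu, hne⟩ := hI
    refine ⟨Finset.subset_univ _, ?_⟩
    rw [Finset.card_erase_of_mem (Finset.mem_erase.2 ⟨hne, hu⟩),
      Finset.card_erase_of_mem hv, hcard]
    omega
  · intro I hI J hJ hIJ
    simp only [coe_filter, Set.mem_setOf_eq, Finset.mem_powersetCard] at hI hJ
    obtain ⟨-, hv, hu, hne⟩ := hI
    obtain ⟨-, hv', hu', -⟩ := hJ
    have recov : ∀ (K : Finset V), v ∈ K → u ∈ K → u ≠ v →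
        insert v (insert u ((K.erase v).erase u)) = K := by
      intro K h1 h2 h3
      rw [Finset.insert_erase (Finset.mem_erase.2 ⟨h3, h2⟩), Finset.insert_erase h1]
    simp only at hIJ
    rw [← recov I hv hu hne, ← recov J hv' hu' hne, hIJ]

lemma bCSP_sub_le {V D : Type*} [Fintype V] [DecidableEq V] (k : ℕ)
    (p : Finset V → (V → D) → ℝ)
    (hloc : ∀ (I : Finset V) (x y : V → D), (∀ u ∈ I, x u = y u) → p I x = p I y)
    (hp01 : ∀ I x, 0 ≤ p I x ∧ p I x ≤ 1)
    (x y : V → D) (v : V) (i : D) :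
    |bCSP k p x v i - bCSP k p y v i| ≤
      (((univ : Finset V).filter (fun u => x u ≠ y u)).card : ℝ) *
        ((Fintype.card V).choose (k - 2)) := by
  classical
  set S := ((univ : Finset V).powersetCard k).filter (fun I => v ∈ I) with hS
  set Dv := (univ : Finset V).filter (fun u => x u ≠ y u) with hDv
  set bad := S.filter (fun I => ∃ u ∈ I, u ≠ v ∧ x u ≠ y u) with hbad
  have hzero : ∀ I ∈ S, (¬ ∃ u ∈ I, u ≠ v ∧ x u ≠ y u) →
      p I (Function.update x v i) - p I (Function.update y v i) = 0 := by
    intro I _ hgood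
    push_neg at hgood
    have : p I (Function.update x v i) = p I (Function.update y v i) := by
      apply hloc
      intro u hu
      by_cases huv : u = v
      · subst huv; simp
      · rw [Function.update_of_ne huv, Function.update_of_ne huv]
        exact hgood u hu huv
    linarith
  unfold bCSP
  rw [← Finset.sum_sub_distrib]
  refine (Finset.abs_sum_le_sum_abs _ _).trans ?_
  have hsplit : ∑ I ∈ S, |p I (Function.update x v i) - p I (Function.update y v i)|
      = ∑ I ∈ bad, |p I (Function.update x v i) - p I (Function.update y v i)| := by
    rw [hbad]
    refine (Finset.sum_filter_of_ne ?_).symm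
    intro I hI hne
    by_contra hgood
    exact hne (by rw [hzero I hI hgood]; simp)
  rw [hsplit]
  have hone : ∀ I ∈ bad,
      |p I (Function.update x v i) - p I (Function.update y v i)| ≤ 1 := by
    intro I _
    have h1 := hp01 I (Function.update x v i)
    have h2 := hp01 I (Function.update y v i)
    rw [abs_le]; constructor <;> linarith
  refine (Finset.sum_le_sum hone).trans ?_
  rw [Finset.sum_const, nsmul_eq_mul, mul_one]
  have hsub : bad ⊆ Dv.biUnion (fun u =>
      ((univ : Finset V).powersetCard k).filter (fun I => v ∈ I ∧ u ∈ I ∧ u ≠ v)) := by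
    intro I hI
    rw [hbad, Finset.mem_filter] at hI
    obtain ⟨hIS, u, hu, hne, hxy⟩ := hI
    rw [hS, Finset.mem_filter] at hIS
    refine Finset.mem_biUnion.2 ⟨u, by simp [hDv, hxy], ?_⟩
    exact Finset.mem_filter.2 ⟨hIS.1, hIS.2, hu, hne⟩
  have h1 : (bad.card : ℝ) ≤ ∑ u ∈ Dv, ((((univ : Finset V).powersetCard k).filter
      (fun I => v ∈ I ∧ u ∈ I ∧ u ≠ v)).card : ℕ) := by
    exact_mod_cast (Finset.card_le_card hsub).trans (Finset.card_biUnion_le)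
  refine h1.trans ?_
  have h2 : ∑ u ∈ Dv, ((((univ : Finset V).powersetCard k).filter
      (fun I => v ∈ I ∧ u ∈ I ∧ u ≠ v)).card : ℝ)
      ≤ ∑ _u ∈ Dv, (((Fintype.card V).choose (k - 2)) : ℝ) := by
    refine Finset.sum_le_sum fun u _ => ?_
    exact_mod_cast card_pair_filter k v u
  push_cast at h2 ⊢
  refine h2.trans ?_
  rw [Finset.sum_const, nsmul_eq_mul]

lemma objCSP_update_eq {V D : Type*} [Fintype V] [DecidableEq V] (k : ℕ)
    (p : Finset V → (V → D) → ℝ)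
    (hloc : ∀ (I : Finset V) (x y : V → D), (∀ u ∈ I, x u = y u) → p I x = p I y)
    (x : V → D) (v : V) (j : D) :
    objCSP k p (Function.update x v j) = bCSP k p x v j +
      ∑ I ∈ ((univ : Finset V).powersetCard k).filter (fun I => v ∉ I), p I x := by
  unfold objCSP bCSP
  rw [← Finset.sum_filter_add_sum_filter_not ((univ : Finset V).powersetCard k)
    (fun I => v ∈ I)]
  congr 1
  refine Finset.sum_congr rfl fun I hI => ?_
  refine hloc I _ _ fun u hu => ?_
  have huv : u ≠ v := fun h => ((Finset.mem_filter.1 hI).2) (h ▸ hu)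
  rw [Function.update_of_ne huv]

lemma sum_bCSP_self {V D : Type*} [Fintype V] [DecidableEq V] (k : ℕ)
    (p : Finset V → (V → D) → ℝ) (xs : V → D) :
    ∑ v : V, bCSP k p xs v (xs v) = k * objCSP k p xs := by
  unfold bCSP objCSP
  simp only [Function.update_eq_self]
  calc ∑ v : V, ∑ I ∈ ((univ : Finset V).powersetCard k).filter (fun I => v ∈ I), p I xs
      = ∑ v : V, ∑ I ∈ (univ : Finset V).powersetCard k,
          if v ∈ I then p I xs else 0 := by
        simp [Finset.sum_filter]
    _ = ∑ I ∈ (univ : Finset V).powersetCard k, ∑ v : V,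
          if v ∈ I then p I xs else 0 := Finset.sum_comm
    _ = ∑ I ∈ (univ : Finset V).powersetCard k, (I.card : ℝ) * p I xs := by
        refine Finset.sum_congr rfl fun I _ => ?_
        rw [Finset.sum_ite_mem, Finset.univ_inter, Finset.sum_const, nsmul_eq_mul]
    _ = ∑ I ∈ (univ : Finset V).powersetCard k, (k : ℝ) * p I xs := by
        refine Finset.sum_congr rfl fun I hI => ?_
        rw [(Finset.mem_powersetCard.1 hI).2]
    _ = k * ∑ I ∈ (univ : Finset V).powersetCard k, p I xs := by rw [Finset.mul_sum]

/-- under the same hypotheses, every clear variable belongs to the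
clear-cut set C, and hence |V ∖ C| is at most the number of unclear variables,
which is at most 3nγ/δ when Obj(x*) = γ·C(n,k). -/
theorem clear_in_C_and_few_tricky {V D : Type*} [Fintype V] [DecidableEq V] (k : ℕ)
    (hk : 2 ≤ k) (hkn : k ≤ Fintype.card V)
    (hn : (Fintype.card V : ℝ) / k ≤ ((Fintype.card V : ℝ) - k + 1) / ((k : ℝ) - 1))
    (δ γ : ℝ) (hδ : 0 < δ)
    (p : Finset V → (V → D) → ℝ)
    (hloc : ∀ (I : Finset V) (x y : V → D), (∀ u ∈ I, x u = y u) → p I x = p I y)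
    (hp01 : ∀ I x, 0 ≤ p I x ∧ p I x ≤ 1)
    (hdense : ∀ (x : V → D) (v : V) (i j : D), i ≠ j →
      δ * ((Fintype.card V).choose (k - 1)) ≤ bCSP k p x v i + bCSP k p x v j)
    (xs : V → D) (hopt : ∀ x : V → D, objCSP k p xs ≤ objCSP k p x)
    (hγ : objCSP k p xs = γ * ((Fintype.card V).choose k))
    (x1 : V → D)
    (hdiff : (((univ : Finset V).filter (fun u => x1 u ≠ xs u)).card : ℝ)
      ≤ δ * (Fintype.card V) / (12 * k))
    (x2 : V → D) (hx2 : ∀ (v : V) (i : D), bCSP k p x1 v (x2 v) ≤ bCSP k p x1 v i) :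
    (∀ v : V,
      (∀ j : D, j ≠ xs v →
        bCSP k p xs v (xs v) <
          bCSP k p xs v j - (δ / 3) * ((Fintype.card V).choose (k - 1))) →
      (∀ j : D, j ≠ x2 v →
        bCSP k p x1 v (x2 v) <
          bCSP k p x1 v j - δ * ((Fintype.card V).choose (k - 1)) / 6)) ∧
    ((((univ : Finset V).filter (fun v => ¬ (∀ j : D, j ≠ x2 v →
        bCSP k p x1 v (x2 v) <
          bCSP k p x1 v j - δ * ((Fintype.card V).choose (k - 1)) / 6))).card : ℝ)
      ≤ 3 * (Fintype.card V) * γ / δ) := by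
  classical
  set n := Fintype.card V with hndef
  have hk2 : (2:ℝ) ≤ (k:ℝ) := by exact_mod_cast hk
  have hkpos : (0:ℝ) < (k:ℝ) := by linarith
  set C1 : ℝ := ((n.choose (k-1) : ℕ) : ℝ) with hC1def
  set C2 : ℝ := ((n.choose (k-2) : ℕ) : ℝ) with hC2def
  have hC1pos : 0 < C1 := by
    have h : 0 < n.choose (k-1) := Nat.choose_pos (le_trans (Nat.sub_le k 1) hkn)
    rw [hC1def]
    exact_mod_cast h
  have hC2nonneg : 0 ≤ C2 := by positivity
  -- identity: choose(n,k-1)*(k-1) = choose(n,k-2)*(n-k+2)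
  have hid1 : C1 * ((k:ℝ) - 1) = C2 * ((n:ℝ) - k + 2) := by
    have h := Nat.choose_succ_right_eq n (k-2)
    have e1 : k - 2 + 1 = k - 1 := by omega
    rw [e1] at h
    have h2 : ((n.choose (k-1) * (k-1) : ℕ) : ℝ) = ((n.choose (k-2) * (n - (k-2)) : ℕ) : ℝ) := by
      exact_mod_cast h
    have hk1n : k - 2 ≤ n := by omega
    have h1k : 1 ≤ k := by omega
    have h2k : 2 ≤ k := hk
    push_cast [Nat.cast_sub hk1n, Nat.cast_sub h1k, Nat.cast_sub h2k] at h2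
    rw [hC1def, hC2def]
    push_cast [Nat.cast_sub h1k] at h2 ⊢
    linarith
  -- identity: choose(n,k)*k ≤ choose(n,k-1)*n  (in ℕ)
  have hid2 : (k:ℝ) * ((n.choose k : ℕ) : ℝ) ≤ (n:ℝ) * C1 := by
    have h := Nat.choose_succ_right_eq n (k-1)
    have e1 : k - 1 + 1 = k := by omega
    rw [e1] at h
    have : n.choose k * k ≤ n.choose (k-1) * n :=
      h ▸ Nat.mul_le_mul_left _ (Nat.sub_le _ _)
    have hcast : ((n.choose k * k : ℕ) : ℝ) ≤ ((n.choose (k-1) * n : ℕ) : ℝ) := by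
      exact_mod_cast this
    push_cast at hcast
    rw [hC1def]; push_cast
    linarith
  -- from hn : n*(k-1) ≤ k*(n-k+1)
  have hnkk : (n:ℝ) * ((k:ℝ) - 1) ≤ (k:ℝ) * ((n:ℝ) - k + 1) := by
    have hk1pos : (0:ℝ) < (k:ℝ) - 1 := by linarith
    rw [div_le_div_iff₀ hkpos hk1pos] at hn
    linarith
  -- key: n * C2 ≤ k * C1
  have hkey1 : (n:ℝ) * C2 ≤ (k:ℝ) * C1 := by
    have hk1pos : (0:ℝ) < (k:ℝ) - 1 := by linarith
    have h1 : (n:ℝ) * C2 * ((k:ℝ) - 1) ≤ (k:ℝ) * C1 * ((k:ℝ) - 1) := by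
      nlinarith [hid1, hnkk, hC2nonneg]
    exact le_of_mul_le_mul_right h1 hk1pos
  -- bounded difference
  have hbd : ∀ (v : V) (i : D),
      |bCSP k p x1 v i - bCSP k p xs v i| ≤ δ / 12 * C1 := by
    intro v i
    refine (bCSP_sub_le k p hloc hp01 x1 xs v i).trans ?_
    have h1 : (((univ : Finset V).filter (fun u => x1 u ≠ xs u)).card : ℝ) * C2
        ≤ (δ * n / (12 * k)) * C2 := mul_le_mul_of_nonneg_right hdiff hC2nonneg
    refine h1.trans ?_
    rw [div_mul_eq_mul_div, div_le_iff₀ (by positivity : (0:ℝ) < 12 * (k:ℝ))]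
    nlinarith [hkey1, hδ.le]
  -- b minimal at xs
  have hmin : ∀ (v : V) (j : D), bCSP k p xs v (xs v) ≤ bCSP k p xs v j := by
    intro v j
    have h1 := hopt (Function.update xs v j)
    rw [objCSP_update_eq k p hloc xs v j] at h1
    have h2 := objCSP_update_eq k p hloc xs v (xs v)
    rw [Function.update_eq_self] at h2
    linarith
  -- part 1
  have part1 : ∀ v : V,
      (∀ j : D, j ≠ xs v →
        bCSP k p xs v (xs v) < bCSP k p xs v j - (δ / 3) * C1) →
      (∀ j : D, j ≠ x2 v →
        bCSP k p x1 v (x2 v) < bCSP k p x1 v j - δ * C1 / 6) := by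
    intro v hv
    have hx2v : x2 v = xs v := by
      by_contra hne
      have h1 := hx2 v (xs v)
      have h2 := hv (x2 v) hne
      have h3 := abs_le.1 (hbd v (xs v))
      have h4 := abs_le.1 (hbd v (x2 v))
      linarith [mul_pos hδ hC1pos]
    intro j hj
    rw [hx2v] at hj ⊢
    have h2 := hv j hj
    have h3 := abs_le.1 (hbd v (xs v))
    have h4 := abs_le.1 (hbd v j)
    linarith [mul_pos hδ hC1pos]
  refine ⟨part1, ?_⟩
  -- part 2
  have hbnonneg : ∀ (v : V) (i : D), 0 ≤ bCSP k p xs v i := by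
    intro v i
    exact Finset.sum_nonneg fun I _ => (hp01 I _).1
  set U := (univ : Finset V).filter (fun v => ¬ (∀ j : D, j ≠ xs v →
      bCSP k p xs v (xs v) < bCSP k p xs v j - (δ / 3) * C1)) with hUdef
  have hsub : (univ : Finset V).filter (fun v => ¬ (∀ j : D, j ≠ x2 v →
      bCSP k p x1 v (x2 v) < bCSP k p x1 v j - δ * C1 / 6)) ⊆ U := by
    intro v hv
    rw [Finset.mem_filter] at hv ⊢
    exact ⟨hv.1, fun hc => hv.2 (part1 v hc)⟩
  have hper : ∀ v ∈ U, δ / 3 * C1 ≤ bCSP k p xs v (xs v) := by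
    intro v hv
    rw [hUdef, Finset.mem_filter] at hv
    obtain ⟨-, hv⟩ := hv
    push_neg at hv
    obtain ⟨j, hj, hge⟩ := hv
    have hd := hdense xs v (xs v) j (Ne.symm hj)
    have hm := hmin v j
    linarith
  have hsumU : (U.card : ℝ) * (δ / 3 * C1) ≤ (k:ℝ) * objCSP k p xs := by
    calc (U.card : ℝ) * (δ / 3 * C1) = ∑ _v ∈ U, (δ / 3 * C1) := by
          rw [Finset.sum_const, nsmul_eq_mul]
      _ ≤ ∑ v ∈ U, bCSP k p xs v (xs v) := Finset.sum_le_sum hper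
      _ ≤ ∑ v : V, bCSP k p xs v (xs v) :=
          Finset.sum_le_sum_of_subset_of_nonneg (Finset.filter_subset _ _)
            (fun v _ _ => hbnonneg v (xs v))
      _ = k * objCSP k p xs := sum_bCSP_self k p xs
  have hγ0 : 0 ≤ γ := by
    have hobj : 0 ≤ objCSP k p xs :=
      Finset.sum_nonneg fun I _ => (hp01 I _).1
    have hCkpos : (0:ℝ) < ((n.choose k : ℕ) : ℝ) := by
      exact_mod_cast Nat.choose_pos hkn
    rw [hγ] at hobj
    nlinarith [hobj, hCkpos]
  have hUbound : (U.card : ℝ) ≤ 3 * (n:ℝ) * γ / δ := by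
    have h1 : (k:ℝ) * objCSP k p xs ≤ γ * ((n:ℝ) * C1) := by
      rw [hγ]
      calc (k:ℝ) * (γ * ((n.choose k : ℕ) : ℝ)) = γ * ((k:ℝ) * ((n.choose k : ℕ) : ℝ)) := by ring
        _ ≤ γ * ((n:ℝ) * C1) := mul_le_mul_of_nonneg_left hid2 hγ0
    have h2 : (U.card : ℝ) * (δ / 3 * C1) ≤ γ * ((n:ℝ) * C1) := le_trans hsumU h1
    rw [le_div_iff₀ hδ]
    have h3 : (U.card : ℝ) * δ * C1 ≤ 3 * (n:ℝ) * γ * C1 := by linarith [h2]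
    exact le_of_mul_le_mul_right h3 hC1pos
  calc ((((univ : Finset V).filter (fun v => ¬ (∀ j : D, j ≠ x2 v →
        bCSP k p x1 v (x2 v) <
          bCSP k p x1 v j - δ * ((Fintype.card V).choose (k - 1)) / 6))).card : ℝ))
      ≤ (U.card : ℝ) := by exact_mod_cast Finset.card_le_card hsub
    _ ≤ 3 * (n:ℝ) * γ / δ := hUbound
end

section
/- Fix a partition of the variable set V into C and T with |T| ≥ k, an assignment x⁽²⁾ of V, and for K ∈ binom(T,k) define q_K(y) = ∑_{j=1}^{k} ∑_{J ∈ binom(K,j)} ∑_{L ∈ binom(C,k-j)} p_{J∪L}(R_{Ty}(x⁽²⁾)) · C(|T|-j, k-j)^{-1}. Then for any assignment y of T: Obj(R_{Ty}(x⁽²⁾)) = ∑_{K ∈ binom(T,k)} q_K(y) + ∑_{I ∈ binom(C,k)} p_I(x⁽²⁾). -/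
open Finset
open scoped Classical

/-- The padded cost function q_K(y). Here `R` is the combined assignment agreeing
with `y` on `T` and with `x2` elsewhere. -/
noncomputable def qPad {V D : Type*} [Fintype V] [DecidableEq V] (k : ℕ)
    (p : Finset V → (V → D) → ℝ) (Cs T : Finset V) (x2 y : V → D)
    (K : Finset V) : ℝ :=
  ∑ j ∈ Finset.Icc 1 k, ∑ J ∈ K.powersetCard j, ∑ L ∈ Cs.powersetCard (k - j),
    p (J ∪ L) (fun v => if v ∈ T then y v else x2 v) * (((T.card - j).choose (k - j) : ℝ))⁻¹

lemma count_supersets {V : Type*} [DecidableEq V] (T J : Finset V) (k : ℕ)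
    (hJ : J ⊆ T) (hjk : J.card ≤ k) :
    ((T.powersetCard k).filter (fun K => J ⊆ K)).card
      = (T.card - J.card).choose (k - J.card) := by
  rw [← Finset.card_sdiff_of_subset hJ, ← Finset.card_powersetCard]
  apply Finset.card_bij (fun K _ => K \ J)
  · intro K hK
    simp only [Finset.mem_filter, Finset.mem_powersetCard] at hK ⊢
    refine ⟨Finset.sdiff_subset_sdiff hK.1.1 le_rfl, ?_⟩
    rw [Finset.card_sdiff_of_subset hK.2, hK.1.2]
  · intro K1 h1 K2 h2 h
    simp only [Finset.mem_filter, Finset.mem_powersetCard] at h1 h2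
    have e1 : K1 = K1 \ J ∪ J := by
      rw [Finset.sdiff_union_self_eq_union, Finset.union_eq_left.2 h1.2]
    have e2 : K2 = K2 \ J ∪ J := by
      rw [Finset.sdiff_union_self_eq_union, Finset.union_eq_left.2 h2.2]
    rw [e1, e2, h]
  · intro S hS
    simp only [Finset.mem_powersetCard, Finset.subset_sdiff] at hS
    refine ⟨S ∪ J, ?_, ?_⟩
    · simp only [Finset.mem_filter, Finset.mem_powersetCard]
      refine ⟨⟨Finset.union_subset hS.1.1 hJ, ?_⟩, Finset.subset_union_right⟩
      rw [Finset.card_union_of_disjoint hS.1.2, hS.2, Nat.sub_add_cancel hjk]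
    · rw [Finset.union_sdiff_right, Finset.sdiff_eq_self_of_disjoint hS.1.2]

lemma sum_powersetCard_union {V : Type*} [DecidableEq V] (Cs T : Finset V)
    (hdisj : Disjoint Cs T) (k : ℕ) (f : Finset V → ℝ) :
    ∑ I ∈ (Cs ∪ T).powersetCard k, f I
      = ∑ j ∈ Finset.range (k+1), ∑ J ∈ T.powersetCard j,
          ∑ L ∈ Cs.powersetCard (k - j), f (J ∪ L) := by
  have key : ∑ I ∈ (Cs ∪ T).powersetCard k, f I
      = ∑ x ∈ (Finset.range (k+1)).sigma
          (fun j => T.powersetCard j ×ˢ Cs.powersetCard (k - j)),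
          f (x.2.1 ∪ x.2.2) := by
    refine Finset.sum_nbij' (fun I => ⟨(I ∩ T).card, (I ∩ T, I ∩ Cs)⟩)
        (fun x => x.2.1 ∪ x.2.2) ?_ ?_ ?_ ?_ ?_
    · intro I hI
      simp only [Finset.mem_powersetCard] at hI
      have hsplit : I ∩ T ∪ I ∩ Cs = I := by
        rw [← Finset.inter_union_distrib_left, Finset.union_comm T Cs]
        exact Finset.inter_eq_left.2 hI.1
      have hd : Disjoint (I ∩ T) (I ∩ Cs) :=
        hdisj.symm.mono Finset.inter_subset_right Finset.inter_subset_right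
      have hcards : (I ∩ T).card + (I ∩ Cs).card = k := by
        rw [← Finset.card_union_of_disjoint hd, hsplit, hI.2]
      simp only [Finset.mem_sigma, Finset.mem_range, Finset.mem_product,
        Finset.mem_powersetCard]
      refine ⟨Nat.lt_succ_of_le (by omega), ⟨Finset.inter_subset_right, by trivial⟩,
        Finset.inter_subset_right, by omega⟩
    · intro x hx
      simp only [Finset.mem_sigma, Finset.mem_range, Finset.mem_product,
        Finset.mem_powersetCard] at hx ⊢
      obtain ⟨hj, ⟨hJT, hJc⟩, hLC, hLc⟩ := hx
      refine ⟨Finset.union_subset (hJT.trans Finset.subset_union_right)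
        (hLC.trans Finset.subset_union_left), ?_⟩
      rw [Finset.card_union_of_disjoint
        (hdisj.symm.mono hJT hLC), hJc, hLc]
      omega
    · intro I hI
      simp only [Finset.mem_powersetCard] at hI
      simp only
      rw [← Finset.inter_union_distrib_left, Finset.union_comm T Cs]
      exact Finset.inter_eq_left.2 hI.1
    · intro x hx
      simp only [Finset.mem_sigma, Finset.mem_range, Finset.mem_product,
        Finset.mem_powersetCard] at hx
      obtain ⟨hj, ⟨hJT, hJc⟩, hLC, hLc⟩ := hx
      have h1 : (x.2.1 ∪ x.2.2) ∩ T = x.2.1 := by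
        rw [Finset.union_inter_distrib_right, Finset.inter_eq_left.2 hJT,
          Finset.disjoint_iff_inter_eq_empty.1 (hdisj.mono_left hLC), Finset.union_empty]
      have h2 : (x.2.1 ∪ x.2.2) ∩ Cs = x.2.2 := by
        rw [Finset.union_inter_distrib_right, Finset.inter_eq_left.2 hLC,
          Finset.disjoint_iff_inter_eq_empty.1 (hdisj.symm.mono_left hJT), Finset.empty_union]
      obtain ⟨j, J, L⟩ := x
      simp only at h1 h2 hJc ⊢
      refine Sigma.ext ?_ ?_
      · simp [h1, hJc]
      · simp [h1, h2]
    · intro I hI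
      simp only [Finset.mem_powersetCard] at hI
      congr 1
      rw [← Finset.inter_union_distrib_left, Finset.union_comm T Cs]
      exact (Finset.inter_eq_left.2 hI.1).symm
  rw [key, Finset.sum_sigma]
  exact Finset.sum_congr rfl fun j _ => by rw [Finset.sum_product]

/-- with V partitioned into C and T (|T| ≥ k),
Obj(R_{Ty}(x⁽²⁾)) = ∑_{K ∈ binom(T,k)} q_K(y) + ∑_{I ∈ binom(C,k)} p_I(x⁽²⁾). -/
theorem padded_decomposition {V D : Type*} [Fintype V] [DecidableEq V] (k : ℕ)
    (hk : 1 ≤ k)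
    (p : Finset V → (V → D) → ℝ)
    (hloc : ∀ (I : Finset V) (x y : V → D), (∀ u ∈ I, x u = y u) → p I x = p I y)
    (Cs T : Finset V) (hdisj : Disjoint Cs T) (hunion : Cs ∪ T = univ)
    (hT : k ≤ T.card)
    (x2 y : V → D) :
    objCSP k p (fun v => if v ∈ T then y v else x2 v)
      = (∑ K ∈ T.powersetCard k, qPad k p Cs T x2 y K)
        + ∑ I ∈ Cs.powersetCard k, p I x2 := by
  set R : V → D := fun v => if v ∈ T then y v else x2 v with hR
  -- swap K and J sums
  have hswap : ∀ (j : ℕ) (g : Finset V → ℝ),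
      ∑ K ∈ T.powersetCard k, ∑ J ∈ K.powersetCard j, g J
        = ∑ J ∈ T.powersetCard j,
            (((T.powersetCard k).filter (fun K => J ⊆ K)).card : ℝ) * g J := by
    intro j g
    have step : ∀ K ∈ T.powersetCard k, ∑ J ∈ K.powersetCard j, g J
        = ∑ J ∈ T.powersetCard j, if J ⊆ K then g J else 0 := by
      intro K hK
      rw [← Finset.sum_filter]
      congr 1
      ext J
      simp only [Finset.mem_filter, Finset.mem_powersetCard]
      have hKT := (Finset.mem_powersetCard.1 hK).1
      constructor
      · rintro ⟨hJK, hc⟩; exact ⟨⟨hJK.trans hKT, hc⟩, hJK⟩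
      · rintro ⟨⟨_, hc⟩, hJK⟩; exact ⟨hJK, hc⟩
    rw [Finset.sum_congr rfl step, Finset.sum_comm]
    refine Finset.sum_congr rfl fun J hJ => ?_
    rw [Finset.sum_ite, Finset.sum_const_zero, add_zero, Finset.sum_const,
      nsmul_eq_mul]
  -- main first term computation
  have hfirst : ∑ K ∈ T.powersetCard k, qPad k p Cs T x2 y K
      = ∑ j ∈ Finset.Icc 1 k, ∑ J ∈ T.powersetCard j,
          ∑ L ∈ Cs.powersetCard (k - j), p (J ∪ L) R := by
    unfold qPad
    rw [Finset.sum_comm]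
    refine Finset.sum_congr rfl fun j hj => ?_
    rw [hswap j (fun J => ∑ L ∈ Cs.powersetCard (k - j),
      p (J ∪ L) R * (((T.card - j).choose (k - j) : ℝ))⁻¹)]
    refine Finset.sum_congr rfl fun J hJ => ?_
    simp only [Finset.mem_Icc] at hj
    rw [count_supersets T J k (Finset.mem_powersetCard.1 hJ).1
      (by rw [(Finset.mem_powersetCard.1 hJ).2]; exact hj.2),
      (Finset.mem_powersetCard.1 hJ).2]
    rw [← Finset.sum_mul, ← mul_assoc]
    have hc : (((T.card - j).choose (k - j) : ℝ)) ≠ 0 := by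
      have : 0 < (T.card - j).choose (k - j) := Nat.choose_pos (by omega)
      positivity
    rw [mul_comm, ← mul_assoc, inv_mul_cancel₀ hc, one_mul]
  -- LHS computation
  have hlhs : objCSP k p R
      = ∑ j ∈ Finset.range (k+1), ∑ J ∈ T.powersetCard j,
          ∑ L ∈ Cs.powersetCard (k - j), p (J ∪ L) R := by
    unfold objCSP
    rw [← hunion]
    exact sum_powersetCard_union Cs T hdisj k (fun I => p I R)
  have hrange : Finset.range (k+1) = insert 0 (Finset.Icc 1 k) := by
    ext i; simp; omega
  rw [hlhs, hrange, Finset.sum_insert (by simp), hfirst]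
  rw [add_comm]
  congr 1
  -- the j = 0 term
  rw [Finset.powersetCard_zero, Finset.sum_singleton, Nat.sub_zero]
  refine Finset.sum_congr rfl fun L hL => ?_
  rw [Finset.empty_union]
  refine hloc L R x2 fun u hu => ?_
  have huC : u ∈ Cs := (Finset.mem_powersetCard.1 hL).1 hu
  have : u ∉ T := fun hT' => (Finset.disjoint_left.1 hdisj) huC hT'
  simp [hR, this]
end

section
/- With q_K defined as the padded cost function, one has 0 ≤ q_K(y) ≤ ∑_{j=1}^{k} C(k,j)·C(|C|,k-j)·C(|T|-j,k-j)^{-1} for every K ∈ binom(T,k) and assignment y; in particular q_K(y) = O((|C|/|T|)^{k-1}) for fixed k. -/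
open Finset
open scoped Classical

/-- 0 ≤ q_K(y) ≤ ∑_{j=1}^k C(k,j)·C(|C|,k-j)·C(|T|-j,k-j)⁻¹. -/
theorem qPad_bound {V D : Type*} [Fintype V] [DecidableEq V] (k : ℕ) (hk : 1 ≤ k)
    (p : Finset V → (V → D) → ℝ) (hp01 : ∀ I x, 0 ≤ p I x ∧ p I x ≤ 1)
    (Cs T : Finset V) (hdisj : Disjoint Cs T) (hunion : Cs ∪ T = univ)
    (hT : k ≤ T.card)
    (x2 y : V → D) (K : Finset V) (hK : K ∈ T.powersetCard k) :
    0 ≤ qPad k p Cs T x2 y K ∧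
    qPad k p Cs T x2 y K ≤
      ∑ j ∈ Finset.Icc 1 k,
        (k.choose j : ℝ) * ((Cs.card).choose (k - j)) *
          (((T.card - j).choose (k - j) : ℝ))⁻¹ := by
  have hKcard : K.card = k := (Finset.mem_powersetCard.mp hK).2
  constructor
  · apply Finset.sum_nonneg; intro j _
    apply Finset.sum_nonneg; intro J _
    apply Finset.sum_nonneg; intro L _
    exact mul_nonneg (hp01 _ _).1 (by positivity)
  · apply Finset.sum_le_sum
    intro j _
    calc ∑ J ∈ K.powersetCard j, ∑ L ∈ Cs.powersetCard (k - j),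
        p (J ∪ L) (fun v => if v ∈ T then y v else x2 v) * (((T.card - j).choose (k - j) : ℝ))⁻¹
        ≤ ∑ _J ∈ K.powersetCard j, ∑ _L ∈ Cs.powersetCard (k - j),
            (((T.card - j).choose (k - j) : ℝ))⁻¹ := by
          apply Finset.sum_le_sum; intro J _
          apply Finset.sum_le_sum; intro L _
          nth_rewrite 2 [← one_mul (((T.card - j).choose (k - j) : ℝ))⁻¹]
          exact mul_le_mul_of_nonneg_right (hp01 _ _).2 (by positivity)
      _ = (k.choose j : ℝ) * ((Cs.card).choose (k - j)) * (((T.card - j).choose (k - j) : ℝ))⁻¹ := by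
          simp [Finset.sum_const, Finset.card_powersetCard, hKcard, mul_assoc]
end

section
/- Hierarchical clustering with a fixed trunk is (1/M)-rigid in the following sense: for an optimal assignment x* of leaves to clusters, every vertex v, and every cluster j ≠ x*_v, b(x*,v,x*_v) + b(x*,v,j) ≥ (1/M)·(|{u ∈ V : x*_u = x*_v}| - 1). -/
open Finset

/-- Pairwise cost of the hierarchical-clustering MIN-2CSP with fixed trunk:
p_{u,v}(a,b) = (1/M)|f(a,b) - F(u,v)|. -/
noncomputable def pHC {V Dc : Type*} (M : ℕ) (f : Dc → Dc → ℕ) (F : V → V → ℕ)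
    (u v : V) (a b : Dc) : ℝ :=
  (1 / (M : ℝ)) * |(f a b : ℝ) - (F u v : ℝ)|

/-- b(x,v,i) = ∑_{u ≠ v} p_{u,v}(x_u, i). -/
noncomputable def bHC {V Dc : Type*} [Fintype V] [DecidableEq V]
    (M : ℕ) (f : Dc → Dc → ℕ) (F : V → V → ℕ) (x : V → Dc) (v : V) (i : Dc) : ℝ :=
  ∑ u ∈ (univ : Finset V).erase v, pHC M f F u v (x u) i

/-- The MIN-2CSP objective, Obj(x) = (1/2)∑_v b(x,v,x_v). -/
noncomputable def objHC {V Dc : Type*} [Fintype V] [DecidableEq V]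
    (M : ℕ) (f : Dc → Dc → ℕ) (F : V → V → ℕ) (x : V → Dc) : ℝ :=
  (1 / 2) * ∑ v : V, bHC M f F x v (x v)

/-- hierarchical clustering with a fixed trunk is (1/M)-rigid:
for an optimal x*, every v and every cluster j ≠ x*_v,
b(x*,v,x*_v) + b(x*,v,j) ≥ (1/M)(|{u : x*_u = x*_v}| - 1). -/
theorem hc_rigid {V Dc : Type*} [Fintype V] [DecidableEq V] [DecidableEq Dc]
    (M : ℕ) (hM : 1 ≤ M)
    (f : Dc → Dc → ℕ) (hf0 : ∀ i, f i i = 0) (hf1 : ∀ i j, i ≠ j → 1 ≤ f i j)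
    (F : V → V → ℕ) (hF : ∀ u v, F u v ≤ M)
    (xs : V → Dc) (hopt : ∀ x : V → Dc, objHC M f F xs ≤ objHC M f F x)
    (v : V) (j : Dc) (hj : j ≠ xs v) :
    (1 / (M : ℝ)) * ((((univ : Finset V).filter (fun u => xs u = xs v)).card : ℝ) - 1)
      ≤ bHC M f F xs v (xs v) + bHC M f F xs v j := by

  classical
  have hMpos : (0:ℝ) < M := by exact_mod_cast hM
  set S : Finset V := ((univ : Finset V).erase v).filter (fun u => xs u = xs v) with hS
  have hcard : (S.card : ℝ) = (((univ : Finset V).filter (fun u => xs u = xs v)).card : ℝ) - 1 := by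
    have : S = ((univ : Finset V).filter (fun u => xs u = xs v)).erase v := by
      rw [hS, Finset.filter_erase]
    rw [this, Finset.card_erase_of_mem (by simp)]
    have h1 : 1 ≤ ((univ : Finset V).filter (fun u => xs u = xs v)).card :=
      Finset.card_pos.mpr ⟨v, by simp⟩
    push_cast [Nat.cast_sub h1]
    ring
  rw [bHC, bHC, ← Finset.sum_add_distrib]
  have key : ∀ u ∈ S, 1 / (M:ℝ) ≤ pHC M f F u v (xs u) (xs v) + pHC M f F u v (xs u) j := by
    intro u hu
    have hxu : xs u = xs v := (Finset.mem_filter.mp hu).2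
    have hf : 1 ≤ f (xs u) j := hf1 _ _ (by rw [hxu]; exact fun h => hj h.symm)
    have h00 : f (xs u) (xs v) = 0 := by rw [hxu, hf0]
    rw [pHC, pHC, h00, ← mul_add]
    have htri : (1:ℝ) ≤ |((0:ℕ):ℝ) - (F u v : ℝ)| + |(f (xs u) j : ℝ) - (F u v : ℝ)| := by
      have h1 : (1:ℝ) ≤ (f (xs u) j : ℝ) := by exact_mod_cast hf
      have h2 : (f (xs u) j : ℝ) - F u v ≤ |(f (xs u) j : ℝ) - (F u v : ℝ)| := le_abs_self _
      have h3 : |((0:ℕ):ℝ) - (F u v : ℝ)| = F u v := by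
        simp [abs_of_nonneg]
      linarith
    calc (1:ℝ)/M = 1/M * 1 := (mul_one _).symm
      _ ≤ _ := mul_le_mul_of_nonneg_left htri (by positivity)
  calc (1 / (M:ℝ)) * ((((univ : Finset V).filter (fun u => xs u = xs v)).card : ℝ) - 1)
      = ∑ u ∈ S, 1 / (M:ℝ) := by rw [Finset.sum_const, nsmul_eq_mul, hcard]; ring
    _ ≤ ∑ u ∈ S, (pHC M f F u v (xs u) (xs v) + pHC M f F u v (xs u) j) :=
        Finset.sum_le_sum key
    _ ≤ ∑ u ∈ (univ : Finset V).erase v,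
          (pHC M f F u v (xs u) (xs v) + pHC M f F u v (xs u) j) := by
        apply Finset.sum_le_sum_of_subset_of_nonneg (Finset.filter_subset _ _)
        intro u _ _
        have : 0 ≤ pHC M f F u v (xs u) (xs v) := by
          rw [pHC]; positivity
        have : 0 ≤ pHC M f F u v (xs u) j := by
          rw [pHC]; positivity
        linarith
end

section
/- In a δ-rigid MIN-2CSP with optimal assignment x*, every δc/3-unclear vertex v lying in an optimal cluster of size at least c satisfies b(x*,v,x*_v) ≥ δc/3, and hence the number of such vertices is at most 6·OPT/(δc). -/
open Finset
open scoped Classical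

/-- b(x,v,i) = ∑_{u ≠ v} p_{u,v}(x_u, i) for a MIN-2CSP. -/
noncomputable def b2 {V D : Type*} [Fintype V] [DecidableEq V]
    (p : V → V → D → D → ℝ) (x : V → D) (v : V) (i : D) : ℝ :=
  ∑ u ∈ (univ : Finset V).erase v, p u v (x u) i

/-- in a δ-rigid MIN-2CSP with optimum x* and OPT = (1/2)∑_v b(x*,v,x*_v),
every δc/3-unclear vertex v in an optimal cluster of size at least c has
b(x*,v,x*_v) ≥ δc/3, and the number of such vertices is at most 6·OPT/(δc). -/
theorem few_unclear_rigid {V D : Type*} [Fintype V] [DecidableEq V] [DecidableEq D]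
    (p : V → V → D → D → ℝ) (hp : ∀ u v a b, 0 ≤ p u v a b ∧ p u v a b ≤ 1)
    (δ c : ℝ) (hδ : 0 < δ) (hc : 0 < c)
    (xs : V → D)
    (hrigid : ∀ (v : V) (j : D), j ≠ xs v →
      δ * (((univ : Finset V).filter (fun u => xs u = xs v)).card : ℝ)
        ≤ b2 p xs v (xs v) + b2 p xs v j) :
    (∀ v : V,
      (∃ j, j ≠ xs v ∧ b2 p xs v j - δ * c / 3 ≤ b2 p xs v (xs v)) →
      c ≤ (((univ : Finset V).filter (fun u => xs u = xs v)).card : ℝ) →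
      δ * c / 3 ≤ b2 p xs v (xs v)) ∧
    ((((univ : Finset V).filter (fun v =>
        (∃ j, j ≠ xs v ∧ b2 p xs v j - δ * c / 3 ≤ b2 p xs v (xs v)) ∧
        c ≤ (((univ : Finset V).filter (fun u => xs u = xs v)).card : ℝ))).card : ℝ)
      ≤ 6 * ((1 / 2) * ∑ v : V, b2 p xs v (xs v)) / (δ * c)) := by
  have hb0 : ∀ v i, 0 ≤ b2 p xs v i := fun v i =>
    Finset.sum_nonneg fun u _ => (hp u v (xs u) i).1
  have key : ∀ v : V,
      (∃ j, j ≠ xs v ∧ b2 p xs v j - δ * c / 3 ≤ b2 p xs v (xs v)) →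
      c ≤ (((univ : Finset V).filter (fun u => xs u = xs v)).card : ℝ) →
      δ * c / 3 ≤ b2 p xs v (xs v) := by
    rintro v ⟨j, hj, hjb⟩ hcard
    have h1 := hrigid v j hj
    nlinarith [h1, hjb, hcard, hδ.le, hδ]
  refine ⟨key, ?_⟩
  set S := (univ : Finset V).filter (fun v =>
        (∃ j, j ≠ xs v ∧ b2 p xs v j - δ * c / 3 ≤ b2 p xs v (xs v)) ∧
        c ≤ (((univ : Finset V).filter (fun u => xs u = xs v)).card : ℝ)) with hS
  have hsum : (S.card : ℝ) * (δ * c / 3) ≤ ∑ v : V, b2 p xs v (xs v) := by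
    calc (S.card : ℝ) * (δ * c / 3) = ∑ _v ∈ S, (δ * c / 3) := by
          rw [Finset.sum_const, nsmul_eq_mul]
      _ ≤ ∑ v ∈ S, b2 p xs v (xs v) := by
          refine Finset.sum_le_sum fun v hv => ?_
          rw [hS, Finset.mem_filter] at hv
          exact key v hv.2.1 hv.2.2
      _ ≤ ∑ v : V, b2 p xs v (xs v) :=
          Finset.sum_le_sum_of_subset_of_nonneg (Finset.subset_univ _)
            (fun v _ _ => hb0 v _)
  rw [le_div_iff₀ (by positivity)]
  nlinarith [hsum]
end
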